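/- Let G be a connected graph with a basis forced vertex v, let H be obtained from G by attaching a pendant u to v, and let R be any metric basis of G. If R is not a resolving set of H, then the set (R \ {v}) ∪ {u} is a resolving set of H. -/

import Mathlib

open SimpleGraph

def isResolving {V : Type*} (G : SimpleGraph V) (S : Set V) : Prop :=
  ∀ x y : V, x ≠ y → ∃ s ∈ S, G.dist s x ≠ G.dist s y

noncomputable def metricDim {V : Type*} (G : SimpleGraph V) : ℕ :=
  sInf {n | ∃ S : Set V, isResolving G S ∧ S.ncard = n}

def isMetricBasis {V : Type*} (G : SimpleGraph V) (S : Set V) : Prop :=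
  isResolving G S ∧ S.ncard = metricDim G

def isBasisForced {V : Type*} (G : SimpleGraph V) (v : V) : Prop :=
  ∀ S : Set V, isMetricBasis G S → v ∈ S

def attachPendant {V : Type*} (G : SimpleGraph V) (v : V) : SimpleGraph (Option V) :=
  SimpleGraph.fromRel (fun x y =>
    (∃ a b, x = some a ∧ y = some b ∧ G.Adj a b) ∨ (x = some v ∧ y = none))

section Aux

variable {V : Type*} (G : SimpleGraph V) (v : V)

lemma adj_some_some {a b : V} :
    (attachPendant G v).Adj (some a) (some b) ↔ G.Adj a b := by
  constructor
  · rintro ⟨hne, h | h⟩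
    · rcases h with ⟨a', b', ha, hb, hab⟩ | ⟨h1, h2⟩
      · cases ha; cases hb; exact hab
      · exact absurd h2 (by simp)
    · rcases h with ⟨a', b', ha, hb, hab⟩ | ⟨h1, h2⟩
      · cases ha; cases hb; exact hab.symm
      · exact absurd h2 (by simp)
  · intro h
    exact ⟨by simpa using h.ne, Or.inl (Or.inl ⟨a, b, rfl, rfl, h⟩)⟩

lemma adj_none_some {z : Option V} (h : (attachPendant G v).Adj none z) :
    z = some v := by
  rcases h with ⟨hne, h | h⟩
  · rcases h with ⟨a', b', ha, hb, hab⟩ | ⟨h1, h2⟩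
    · exact absurd ha (by simp)
    · exact absurd h1 (by simp)
  · rcases h with ⟨a', b', ha, hb, hab⟩ | ⟨h1, h2⟩
    · exact absurd hb (by simp)
    · exact h1

lemma adj_none_v : (attachPendant G v).Adj none (some v) :=
  ⟨by simp, Or.inr (Or.inr ⟨rfl, rfl⟩)⟩

/-- The homomorphism `G →g attachPendant G v`. -/
def someHom : G →g attachPendant G v where
  toFun := some
  map_rel' := fun h => (adj_some_some G v).2 h

lemma walk_lower {x y : Option V} (w : (attachPendant G v).Walk x y) :
    ∃ p : G.Walk (x.getD v) (y.getD v), p.length ≤ w.length := by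
  induction w with
  | nil => exact ⟨SimpleGraph.Walk.nil, le_refl _⟩
  | @cons x z y h q ih =>
    obtain ⟨p, hp⟩ := ih
    match x, z with
    | some a, some b =>
      exact ⟨SimpleGraph.Walk.cons ((adj_some_some G v).1 h) p, by
        simpa using Nat.succ_le_succ hp⟩
    | some a, none =>
      have ha : a = v := by
        have := adj_none_some G v h.symm
        exact Option.some_injective _ (by simpa using this)
      subst ha
      exact ⟨p, le_trans hp (by simp)⟩
    | none, some b =>
      have hb : b = v := by simpa using adj_none_some G v h
      subst hb
      exact ⟨p, le_trans hp (by simp)⟩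
    | none, none => exact absurd rfl h.ne

lemma reachable_some_some (hG : G.Connected) (a b : V) :
    (attachPendant G v).Reachable (some a) (some b) := by
  obtain ⟨p⟩ := hG.preconnected a b
  exact ⟨p.map (someHom G v)⟩

lemma dist_some_some (hG : G.Connected) (a b : V) :
    (attachPendant G v).dist (some a) (some b) = G.dist a b := by
  apply le_antisymm
  · obtain ⟨p, hp⟩ := (hG.preconnected a b).exists_walk_length_eq_dist
    calc (attachPendant G v).dist (some a) (some b)
        ≤ (p.map (someHom G v)).length := SimpleGraph.dist_le _
      _ = G.dist a b := by simpa using hp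
  · obtain ⟨w, hw⟩ := (reachable_some_some G v hG a b).exists_walk_length_eq_dist
    obtain ⟨p, hp⟩ := walk_lower G v w
    calc G.dist a b ≤ p.length := SimpleGraph.dist_le _
      _ ≤ w.length := hp
      _ = _ := hw

lemma dist_none_some (hG : G.Connected) (a : V) :
    (attachPendant G v).dist none (some a) = G.dist v a + 1 := by
  apply le_antisymm
  · obtain ⟨p, hp⟩ := (hG.preconnected v a).exists_walk_length_eq_dist
    have h1 : (attachPendant G v).dist none (some a)
        ≤ (SimpleGraph.Walk.cons (adj_none_v G v) (p.map (someHom G v))).length :=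
      SimpleGraph.dist_le _
    exact h1.trans (le_of_eq (congrArg (· + 1) ((SimpleGraph.Walk.length_map _ p).trans hp)))
  · have hr : (attachPendant G v).Reachable none (some a) :=
      (SimpleGraph.Adj.reachable (adj_none_v G v)).trans (reachable_some_some G v hG v a)
    obtain ⟨w, hw⟩ := hr.exists_walk_length_eq_dist
    cases w with
    | cons h q =>
      rename_i z
      have hz : z = some v := adj_none_some G v h
      subst hz
      have h1 : G.dist v a ≤ q.length := by
        rw [← dist_some_some G v hG]
        exact SimpleGraph.dist_le _
      have : q.length + 1 = (attachPendant G v).dist none (some a) := by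
        simpa using hw
      omega

end Aux

theorem stmt2 {V : Type*} [Fintype V] (G : SimpleGraph V) (hG : G.Connected)
    (v : V) (hv : isBasisForced G v)
    (R : Set V) (hR : isMetricBasis G R)
    (hnot : ¬ isResolving (attachPendant G v) (some '' R)) :
    isResolving (attachPendant G v) (insert (none : Option V) (some '' (R \ {v}))) := by
  intro x y hxy
  have hres : isResolving G R := hR.1
  -- helper: resolve a pair of `some` vertices
  have key : ∀ a b : V, a ≠ b →
      ∃ s ∈ insert (none : Option V) (some '' (R \ {v})),
        (attachPendant G v).dist s (some a) ≠ (attachPendant G v).dist s (some b) := by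
    intro a b hab
    obtain ⟨s, hsR, hs⟩ := hres a b hab
    by_cases hsv : s = v
    · rw [hsv] at hs
      refine ⟨none, Set.mem_insert _ _, ?_⟩
      rw [dist_none_some G v hG, dist_none_some G v hG]
      omega
    · refine ⟨some s, Set.mem_insert_of_mem _ ⟨s, ⟨hsR, hsv⟩, rfl⟩, ?_⟩
      rw [dist_some_some G v hG, dist_some_some G v hG]
      exact hs
  match x, y with
  | some a, some b => exact key a b (by simpa using hxy)
  | none, some b =>
    refine ⟨none, Set.mem_insert _ _, ?_⟩
    rw [SimpleGraph.dist_self, dist_none_some G v hG]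
    omega
  | some a, none =>
    refine ⟨none, Set.mem_insert _ _, ?_⟩
    rw [SimpleGraph.dist_self, dist_none_some G v hG]
    omega
  | none, none => exact absurd rfl hxy
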